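/- For every k ≥ 1 and every integer n ≥ 2, the Gram matrix G_{kn}, i.e., the real symmetric matrix indexed by D(k) with entries G_{kn}(p,q) = n^{l(p,q)}, is positive definite; in particular it is invertible. -/

import Mathlib

open scoped BigOperators

/-- Non-crossing pair partitions of {1,…,2k}: fixed-point-free non-crossing
involutions of `Fin (2*k)`. -/
def NCPair (k : ℕ) : Type :=
  {p : Equiv.Perm (Fin (2 * k)) //
    (∀ x, p (p x) = x) ∧ (∀ x, p x ≠ x) ∧
    ∀ a b c d : Fin (2 * k), a < b → b < c → c < d → p a = c → p b = d → False}

instance (k : ℕ) : Fintype (NCPair k) := by unfold NCPair; infer_instance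

instance (k : ℕ) : DecidableEq (NCPair k) := by unfold NCPair; infer_instance

/-- `loops p q`: the number of loops obtained by closing the composed diagram,
i.e. the number of orbits of the subgroup generated by `p` and `q` on `Fin (2*k)`. -/
noncomputable def loops {k : ℕ} (p q : NCPair k) : ℕ :=
  Nat.card (MulAction.orbitRel.Quotient
    (↥(Subgroup.closure ({p.1, q.1} : Set (Equiv.Perm (Fin (2 * k)))))) (Fin (2 * k)))

/-- The Gram matrix `G_{kn}(p,q) = n^{l(p,q)}`. -/
noncomputable def Gram (k n : ℕ) : Matrix (NCPair k) (NCPair k) ℝ :=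
  fun p q => (n : ℝ) ^ loops p q

/-- The loop distance `d(p,q) = k - l(p,q)`. -/
noncomputable def loopDist {k : ℕ} (p q : NCPair k) : ℕ := k - loops p q

open Finset

namespace NCGram

/-- A non-crossing perfect matching ("pairing") of a finite set `S ⊆ ℕ`,
given by a function `q : ℕ → ℕ`. -/
def IsPairing (S : Finset ℕ) (q : ℕ → ℕ) : Prop :=
  (∀ x ∈ S, q x ∈ S) ∧ (∀ x ∈ S, q (q x) = x) ∧ (∀ x ∈ S, q x ≠ x) ∧
  (∀ a ∈ S, ∀ b ∈ S, a < b → b < q a → q a < q b → False)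

/-- Number of arcs of `q` strictly enclosing the point `x`. -/
def dep (S : Finset ℕ) (q : ℕ → ℕ) (x : ℕ) : ℕ :=
  (S.filter (fun a => a < x ∧ x < q a)).card

/-- Number of arcs of `q` covering the gap just below `i`. -/
def ht (S : Finset ℕ) (q : ℕ → ℕ) (i : ℕ) : ℕ :=
  (S.filter (fun a => a < i ∧ i ≤ q a)).card

variable {S : Finset ℕ} {p q : ℕ → ℕ}

lemma IsPairing.mem (h : IsPairing S q) {x} (hx : x ∈ S) : q x ∈ S := h.1 x hx
lemma IsPairing.invol (h : IsPairing S q) {x} (hx : x ∈ S) : q (q x) = x := h.2.1 x hx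
lemma IsPairing.ne' (h : IsPairing S q) {x} (hx : x ∈ S) : q x ≠ x := h.2.2.1 x hx
lemma IsPairing.nc (h : IsPairing S q) {a b} (ha : a ∈ S) (hb : b ∈ S) :
    a < b → b < q a → q a < q b → False := h.2.2.2 a ha b hb

lemma IsPairing.eq_iff (h : IsPairing S q) {x z} (hx : x ∈ S) (hz : z ∈ S) :
    q z = q x ↔ z = x :=
  ⟨fun e => by rw [← h.invol hz, e, h.invol hx], fun e => by rw [e]⟩

lemma IsPairing.eq_iff' (h : IsPairing S q) {x z} (hx : x ∈ S) (hz : z ∈ S) :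
    q z = x ↔ z = q x :=
  ⟨fun e => by rw [← h.invol hz, e], fun e => by rw [e, h.invol hx]⟩

/-- Interval invariance: a point strictly inside an arc is matched strictly
inside the arc. -/
lemma IsPairing.interval (h : IsPairing S q) {x z} (hx : x ∈ S) (hz : z ∈ S)
    (h1 : x < z) (h2 : z < q x) : x < q z ∧ q z < q x := by
  have hne1 : q z ≠ q x := fun e => by
    have := (h.eq_iff hx hz).mp e; omega
  have hne2 : q z ≠ x := fun e => by
    have := (h.eq_iff' hx hz).mp e; omega
  constructor
  · by_contra hlt
    push_neg at hlt
    have hlt' : q z < x := lt_of_le_of_ne hlt hne2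
    exact h.nc (h.mem hz) hx hlt' (by rw [h.invol hz]; omega) (by rw [h.invol hz]; omega)
  · by_contra hlt
    push_neg at hlt
    exact h.nc hx hz h1 h2 (lt_of_le_of_ne hlt hne1.symm)

/-- Every nonempty noncrossing pairing has an "adjacent" arc: an arc with no
point of `S` strictly inside it. -/
lemma IsPairing.exists_adjacent (h : IsPairing S p) (hne : S.Nonempty) :
    ∃ x ∈ S, x < p x ∧ ∀ z ∈ S, ¬(x < z ∧ z < p x) := by
  classical
  have hTne : (S.filter (fun x => x < p x)).Nonempty := by
    obtain ⟨y, hy⟩ := hne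
    rcases lt_trichotomy y (p y) with hlt | heq | hgt
    · exact ⟨y, mem_filter.mpr ⟨hy, hlt⟩⟩
    · exact absurd heq.symm (h.ne' hy)
    · exact ⟨p y, mem_filter.mpr ⟨h.mem hy, by rw [h.invol hy]; exact hgt⟩⟩
  obtain ⟨x, hxT, hmin⟩ := (S.filter (fun x => x < p x)).exists_min_image
    (fun x => p x - x) hTne
  obtain ⟨hxS, hxlt⟩ := mem_filter.mp hxT
  refine ⟨x, hxS, hxlt, ?_⟩
  rintro z hz ⟨h1, h2⟩
  obtain ⟨h3, h4⟩ := h.interval hxS hz h1 h2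
  rcases lt_trichotomy z (p z) with hlt | heq | hgt
  · have := hmin z (mem_filter.mpr ⟨hz, hlt⟩); omega
  · exact absurd heq.symm (h.ne' hz)
  · have hmem : p z ∈ S.filter (fun x => x < p x) :=
      mem_filter.mpr ⟨h.mem hz, by rw [h.invol hz]; exact hgt⟩
    have := hmin (p z) hmem
    rw [h.invol hz] at this
    omega

/-- If `a`'s arc strictly encloses `x`, it also strictly encloses `q x`. -/
lemma IsPairing.enclose (h : IsPairing S q) {x a} (hx : x ∈ S) (ha : a ∈ S)
    (h1 : a < x) (h2 : x < q a) : a < q x ∧ q x < q a := by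
  have hqaS := h.mem ha
  have hqxS := h.mem hx
  have hne1 : q x ≠ a := fun e => by
    have : x = q a := by rw [← h.invol hx, e]
    omega
  have hne2 : q x ≠ q a := fun e => by
    have := (h.eq_iff ha hx).mp e; omega
  rcases lt_trichotomy (q x) x with hc | hc | hc
  · -- x is a closer
    constructor
    · by_contra hlt
      push_neg at hlt
      have hlt' : q x < a := lt_of_le_of_ne hlt hne1
      exact h.nc hqxS ha hlt' (by rw [h.invol hx]; omega) (by rw [h.invol hx]; omega)
    · omega
  · exact absurd hc (h.ne' hx)
  · -- x is an opener
    refine ⟨by omega, ?_⟩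
    by_contra hlt
    push_neg at hlt
    have hlt' : q a < q x := lt_of_le_of_ne hlt hne2.symm
    exact h.nc ha hx h1 h2 hlt'

/-- The depth function is exactly constant on arcs. -/
lemma IsPairing.dep_apply (h : IsPairing S q) {x} (hx : x ∈ S) :
    dep S q (q x) = dep S q x := by
  classical
  have mono : ∀ z ∈ S, (S.filter (fun a => a < z ∧ z < q a)) ⊆
      (S.filter (fun a => a < q z ∧ q z < q a)) := by
    intro z hz a haf
    have hmem := mem_filter.mp haf
    obtain ⟨c1, c2⟩ := h.enclose hz hmem.1 hmem.2.1 hmem.2.2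
    exact mem_filter.mpr ⟨hmem.1, c1, c2⟩
  refine le_antisymm ?_ ?_
  · have := card_le_card (mono (q x) (h.mem hx))
    rwa [h.invol hx] at this
  · exact card_le_card (mono x hx)


/-- Split a filtered card over two distinguished elements. -/
lemma card_filter_split2 (S : Finset ℕ) {x y : ℕ} (hx : x ∈ S) (hy : y ∈ S)
    (hxy : x ≠ y) (P : ℕ → Prop) [DecidablePred P] :
    (S.filter P).card = ((S \ {x, y}).filter P).card
      + ((if P x then 1 else 0) + (if P y then 1 else 0)) := by
  classical
  have hsub : ({x, y} : Finset ℕ) ⊆ S := by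
    intro a ha
    simp only [mem_insert, mem_singleton] at ha
    rcases ha with rfl | rfl <;> assumption
  have hS : S = (S \ {x, y}) ∪ {x, y} := (sdiff_union_of_subset hsub).symm
  conv_lhs => rw [hS]
  rw [filter_union, card_union_of_disjoint (disjoint_filter_filter sdiff_disjoint)]
  congr 1
  rw [card_filter, sum_insert (by simp [hxy]), sum_singleton]

lemma card_filter_split4 (S : Finset ℕ) {c x y d : ℕ} (hc : c ∈ S) (hx : x ∈ S)
    (hy : y ∈ S) (hd : d ∈ S) (h1 : c < x) (h2 : x < y) (h3 : y < d)
    (P : ℕ → Prop) [DecidablePred P] :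
    (S.filter P).card = ((S \ {c, x, y, d}).filter P).card
      + ((if P c then 1 else 0) + (if P x then 1 else 0)
        + (if P y then 1 else 0) + (if P d then 1 else 0)) := by
  classical
  have hsub : ({c, x, y, d} : Finset ℕ) ⊆ S := by
    intro a ha
    simp only [mem_insert, mem_singleton] at ha
    rcases ha with rfl | rfl | rfl | rfl <;> assumption
  have hS : S = (S \ {c, x, y, d}) ∪ {c, x, y, d} := (sdiff_union_of_subset hsub).symm
  conv_lhs => rw [hS]
  rw [filter_union, card_union_of_disjoint (disjoint_filter_filter sdiff_disjoint)]
  congr 1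
  rw [card_filter, sum_insert (by simp; omega), sum_insert (by simp; omega),
    sum_insert (by simp; omega), sum_singleton]
  ring

/-- The four structural possibilities at an adjacent `p`-arc `(x,y)`, given the
parity condition of `dep q` at `x` and `y`: either `q` also has the arc `(x,y)`,
or `(x,y)` sits in a "valley" of `q`. -/
lemma IsPairing.adjacent_cases (hq : IsPairing S q) {x y : ℕ} (hx : x ∈ S) (hy : y ∈ S)
    (hxy : x < y) (hgap : ∀ z ∈ S, ¬(x < z ∧ z < y))
    (hpar : dep S q x % 2 = dep S q y % 2) :
    q x = y ∨ (q x < x ∧ y < q y) := by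
  classical
  by_cases hqxy : q x = y
  · exact Or.inl hqxy
  have hqxS := hq.mem hx
  have hqyS := hq.mem hy
  have hqyx : q y ≠ x := fun e => hqxy ((hq.eq_iff' hx hy).mp e).symm
  have hqxx := hq.ne' hx
  have hqyy := hq.ne' hy
  rcases lt_trichotomy (q x) x with hcx | hcx | hcx
  · -- q x < x
    rcases lt_trichotomy (q y) y with hcy | hcy | hcy
    · -- both closers: parity contradiction via A = insert (q y) B
      exfalso
      have hqy_lt : q y < x := by
        have := hgap (q y) hqyS; omega
      have hAB : S.filter (fun a => a < x ∧ x < q a)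
          = insert (q y) (S.filter (fun a => a < y ∧ y < q a)) := by
        ext a
        simp only [mem_filter, mem_insert]
        constructor
        · rintro ⟨haS, ha1, ha2⟩
          by_cases haqy : a = q y
          · exact Or.inl haqy
          · have hqa_ne_y : q a ≠ y := fun e => haqy ((hq.eq_iff' hy haS).mp e)
            have := hgap (q a) (hq.mem haS)
            exact Or.inr ⟨haS, by omega, by omega⟩
        · rintro (rfl | ⟨haS, ha1, ha2⟩)
          · refine ⟨hqyS, hqy_lt, ?_⟩
            rw [hq.invol hy]; omega
          · have hax : a ≠ x := by
              intro e; subst e; omega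
            refine ⟨haS, by have := hgap a haS; omega, by omega⟩
      have hqyB : q y ∉ S.filter (fun a => a < y ∧ y < q a) := by
        simp only [mem_filter, not_and]
        intro _ _
        rw [hq.invol hy]; omega
      unfold dep at hpar
      rw [hAB, card_insert_of_notMem hqyB] at hpar
      omega
    · exact absurd hcy hqyy
    · exact Or.inr ⟨hcx, hcy⟩
  · exact absurd hcx hqxx
  · -- x < q x, hence y < q x
    have hqx_gt : y < q x := by
      have := hgap (q x) hqxS; omega
    rcases lt_trichotomy (q y) y with hcy | hcy | hcy
    · -- q y < y < q x : crossing
      exfalso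
      have hqy_lt : q y < x := by
        have := hgap (q y) hqyS; omega
      exact hq.nc hqyS hx hqy_lt (by rw [hq.invol hy]; omega) (by rw [hq.invol hy]; omega)
    · exact absurd hcy hqyy
    · -- both openers: parity contradiction via B = insert x A
      exfalso
      have hAB : S.filter (fun a => a < y ∧ y < q a)
          = insert x (S.filter (fun a => a < x ∧ x < q a)) := by
        ext a
        simp only [mem_filter, mem_insert]
        constructor
        · rintro ⟨haS, ha1, ha2⟩
          by_cases hax : a = x
          · exact Or.inl hax
          · refine Or.inr ⟨haS, by have := hgap a haS; omega, by omega⟩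
        · rintro (rfl | ⟨haS, ha1, ha2⟩)
          · exact ⟨hx, hxy, hqx_gt⟩
          · have hqa_ne_y : q a ≠ y := fun e => by
              have := (hq.eq_iff' hy haS).mp e; omega
            have := hgap (q a) (hq.mem haS)
            exact ⟨haS, by omega, by omega⟩
      have hxA : x ∉ S.filter (fun a => a < x ∧ x < q a) := by
        simp only [mem_filter, not_and]
        intro _ h; omega
      unfold dep at hpar
      rw [hAB, card_insert_of_notMem hxA] at hpar
      omega


/-! ### The valley surgery -/

/-- Replace the arcs `(q x, x)` and `(y, q y)` of `q` by `(x,y)` and `(q x, q y)`. -/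
def vswap (q : ℕ → ℕ) (x y : ℕ) : ℕ → ℕ := fun z =>
  if z = x then y else if z = y then x else if z = q x then q y
  else if z = q y then q x else q z

variable {x y z : ℕ}

lemma vswap_x : vswap q x y x = y := by simp [vswap]

lemma vswap_y (h : y ≠ x) : vswap q x y y = x := by simp [vswap, h]

lemma vswap_qx (h1 : q x ≠ x) (h2 : q x ≠ y) : vswap q x y (q x) = q y := by
  simp [vswap, h1, h2]

lemma vswap_qy (h1 : q y ≠ x) (h2 : q y ≠ y) (h3 : q y ≠ q x) :
    vswap q x y (q y) = q x := by simp [vswap, h1, h2, h3]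

lemma vswap_other (h1 : z ≠ x) (h2 : z ≠ y) (h3 : z ≠ q x) (h4 : z ≠ q y) :
    vswap q x y z = q z := by simp [vswap, h1, h2, h3, h4]

section Valley

variable (hq : IsPairing S q) (hx : x ∈ S) (hy : y ∈ S) (hxy : x < y)
  (hgap : ∀ z ∈ S, ¬(x < z ∧ z < y)) (hcx : q x < x) (hdy : y < q y)

include hq hx hy hxy hgap hcx hdy

lemma vswap_isPairing : IsPairing S (vswap q x y) := by
  classical
  have hcS := hq.mem hx
  have hdS := hq.mem hy
  have hqc : q (q x) = x := hq.invol hx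
  have hqd : q (q y) = y := hq.invol hy
  refine ⟨?_, ?_, ?_, ?_⟩
  · intro z hz
    unfold vswap
    split_ifs <;> first | exact hy | exact hx | exact hdS | exact hcS | exact hq.mem hz
  · intro z hz
    by_cases h1 : z = x
    · subst h1; rw [vswap_x, vswap_y (by omega)]
    · by_cases h2 : z = y
      · subst h2; rw [vswap_y (by omega), vswap_x]
      · by_cases h3 : z = q x
        · subst h3
          rw [vswap_qx (by omega) (by omega), vswap_qy (by omega) (by omega) (by omega)]
        · by_cases h4 : z = q y
          · subst h4
            rw [vswap_qy (by omega) (by omega) (by omega), vswap_qx (by omega) (by omega)]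
          · rw [vswap_other h1 h2 h3 h4]
            have e1 : q z ≠ x := fun e => h3 ((hq.eq_iff' hx hz).mp e)
            have e2 : q z ≠ y := fun e => h4 ((hq.eq_iff' hy hz).mp e)
            have e3 : q z ≠ q x := fun e => h1 ((hq.eq_iff hx hz).mp e)
            have e4 : q z ≠ q y := fun e => h2 ((hq.eq_iff hy hz).mp e)
            rw [vswap_other e1 e2 e3 e4, hq.invol hz]
  · intro z hz
    unfold vswap
    split_ifs <;> first | omega | exact hq.ne' hz
  · intro a ha b hb hab h1 h2
    have hcS := hq.mem hx
    have hdS := hq.mem hy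
    have hqc : q (q x) = x := hq.invol hx
    have hqd : q (q y) = y := hq.invol hy
    simp only [vswap] at h1 h2
    split_ifs at h1 h2 <;>
    first
    | omega
    | exact hq.nc ha hb hab h1 h2
    | exact hgap b hb ⟨by omega, by omega⟩
    | exact hgap (q a) (hq.mem ha) ⟨by omega, by omega⟩
    | (have hgb := hgap b hb
       rcases lt_or_ge b x with hbx | hbx
       · exact hq.nc hcS hb (by omega) (by omega) (by omega)
       · exact hq.nc hy hb (by omega) (by omega) (by omega))
    | (have hinv := hq.invol ha
       rcases lt_trichotomy (q a) x with hax | hax | hax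
       · exact hq.nc ha hcS (by omega) (by omega) (by omega)
       · have : a = q x := by rw [← hinv, hax]
         omega
       · rcases lt_trichotomy (q a) y with hay | hay | hay
         · exact absurd ⟨hax, hay⟩ (hgap (q a) (hq.mem ha))
         · have : a = q y := by rw [← hinv, hay]
           omega
         · exact hq.nc ha hy (by omega) (by omega) (by omega))

lemma dep_vswap_other (hz : z ∈ S) (hzx : z ≠ x) (hzy : z ≠ y) :
    dep S (vswap q x y) z = dep S q z := by
  classical
  have hcS := hq.mem hx
  have hdS := hq.mem hy
  have hqc : q (q x) = x := hq.invol hx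
  have hqd : q (q y) = y := hq.invol hy
  have hgz := hgap z hz
  unfold dep
  rw [card_filter_split4 S hcS hx hy hdS (by omega) hxy (by omega),
    card_filter_split4 S hcS hx hy hdS (by omega) hxy (by omega)]
  have hfilt : ((S \ {q x, x, y, q y}).filter (fun a => a < z ∧ z < vswap q x y a))
      = ((S \ {q x, x, y, q y}).filter (fun a => a < z ∧ z < q a)) := by
    apply filter_congr
    intro a haS
    simp only [mem_sdiff, mem_insert, mem_singleton, not_or] at haS
    rw [vswap_other haS.2.2.1 haS.2.2.2.1 haS.2.1 haS.2.2.2.2]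
  rw [hfilt, vswap_x, vswap_y (by omega), vswap_qx (by omega) (by omega),
    vswap_qy (by omega) (by omega) (by omega), hqc, hqd]
  split_ifs <;> omega

lemma dep_vswap_x : dep S (vswap q x y) x = dep S q x + 1 := by
  classical
  have hcS := hq.mem hx
  have hdS := hq.mem hy
  have hqc : q (q x) = x := hq.invol hx
  have hqd : q (q y) = y := hq.invol hy
  unfold dep
  rw [card_filter_split4 S hcS hx hy hdS (by omega) hxy (by omega),
    card_filter_split4 S hcS hx hy hdS (by omega) hxy (by omega)]
  have hfilt : ((S \ {q x, x, y, q y}).filter (fun a => a < x ∧ x < vswap q x y a))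
      = ((S \ {q x, x, y, q y}).filter (fun a => a < x ∧ x < q a)) := by
    apply filter_congr
    intro a haS
    simp only [mem_sdiff, mem_insert, mem_singleton, not_or] at haS
    rw [vswap_other haS.2.2.1 haS.2.2.2.1 haS.2.1 haS.2.2.2.2]
  rw [hfilt, vswap_x, vswap_y (by omega), vswap_qx (by omega) (by omega),
    vswap_qy (by omega) (by omega) (by omega), hqc, hqd]
  split_ifs <;> omega

lemma dep_vswap_y : dep S (vswap q x y) y = dep S q y + 1 := by
  classical
  have hcS := hq.mem hx
  have hdS := hq.mem hy
  have hqc : q (q x) = x := hq.invol hx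
  have hqd : q (q y) = y := hq.invol hy
  unfold dep
  rw [card_filter_split4 S hcS hx hy hdS (by omega) hxy (by omega),
    card_filter_split4 S hcS hx hy hdS (by omega) hxy (by omega)]
  have hfilt : ((S \ {q x, x, y, q y}).filter (fun a => a < y ∧ y < vswap q x y a))
      = ((S \ {q x, x, y, q y}).filter (fun a => a < y ∧ y < q a)) := by
    apply filter_congr
    intro a haS
    simp only [mem_sdiff, mem_insert, mem_singleton, not_or] at haS
    rw [vswap_other haS.2.2.1 haS.2.2.2.1 haS.2.1 haS.2.2.2.2]
  rw [hfilt, vswap_x, vswap_y (by omega), vswap_qx (by omega) (by omega),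
    vswap_qy (by omega) (by omega) (by omega), hqc, hqd]
  split_ifs <;> omega

lemma ht_vswap (i : ℕ) :
    ht S (vswap q x y) i = ht S q i + (if x < i ∧ i ≤ y then 2 else 0) := by
  classical
  have hcS := hq.mem hx
  have hdS := hq.mem hy
  have hqc : q (q x) = x := hq.invol hx
  have hqd : q (q y) = y := hq.invol hy
  unfold ht
  rw [card_filter_split4 S hcS hx hy hdS (by omega) hxy (by omega),
    card_filter_split4 S hcS hx hy hdS (by omega) hxy (by omega)]
  have hfilt : ((S \ {q x, x, y, q y}).filter (fun a => a < i ∧ i ≤ vswap q x y a))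
      = ((S \ {q x, x, y, q y}).filter (fun a => a < i ∧ i ≤ q a)) := by
    apply filter_congr
    intro a haS
    simp only [mem_sdiff, mem_insert, mem_singleton, not_or] at haS
    rw [vswap_other haS.2.2.1 haS.2.2.2.1 haS.2.1 haS.2.2.2.2]
  rw [hfilt, vswap_x, vswap_y (by omega), vswap_qx (by omega) (by omega),
    vswap_qy (by omega) (by omega) (by omega), hqc, hqd]
  split_ifs <;> omega

end Valley


/-! ### Deleting an adjacent arc present in a pairing -/

lemma IsPairing.sdiff (hp : IsPairing S p) {x y : ℕ} (hx : x ∈ S) (harc : p x = y) :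
    IsPairing (S \ {x, y}) p := by
  classical
  have hy : y ∈ S := harc ▸ hp.mem hx
  refine ⟨?_, ?_, ?_, ?_⟩
  · intro z hz
    rw [mem_sdiff, mem_insert, mem_singleton] at hz ⊢
    obtain ⟨hzS, hz2⟩ := hz
    push_neg at hz2
    refine ⟨hp.mem hzS, ?_⟩
    push_neg
    constructor
    · intro e
      exact hz2.2 (((hp.eq_iff' hx hzS).mp e).trans harc)
    · intro e
      rw [← harc] at e
      exact hz2.1 ((hp.eq_iff hx hzS).mp e)
  · intro z hz
    exact hp.invol (mem_sdiff.mp hz).1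
  · intro z hz
    exact hp.ne' (mem_sdiff.mp hz).1
  · intro a ha b hb
    exact hp.nc (mem_sdiff.mp ha).1 (mem_sdiff.mp hb).1

lemma dep_sdiff (hq : IsPairing S q) {x y : ℕ} (hx : x ∈ S) (hy : y ∈ S)
    (hxy : x < y) (hgap : ∀ z ∈ S, ¬(x < z ∧ z < y)) (harc : q x = y)
    {z : ℕ} (hz : z ∈ S) : dep (S \ {x, y}) q z = dep S q z := by
  classical
  have hqy : q y = x := by rw [← harc, hq.invol hx]
  have hgz := hgap z hz
  unfold dep
  rw [card_filter_split2 S hx hy (by omega), harc, hqy]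
  split_ifs <;> omega

lemma ht_sdiff (hq : IsPairing S q) {x y : ℕ} (hx : x ∈ S) (hy : y ∈ S)
    (hxy : x < y) (harc : q x = y) (i : ℕ) :
    ht S q i = ht (S \ {x, y}) q i + (if x < i ∧ i ≤ y then 1 else 0) := by
  classical
  have hqy : q y = x := by rw [← harc, hq.invol hx]
  unfold ht
  rw [card_filter_split2 S hx hy (by omega), harc, hqy]
  split_ifs <;> omega

/-! ### The two main induction lemmas -/

/-- **Main comparison lemma**: if the mod-2 depth profile of `q` is constant on
every arc of `p`, then the height profile of `q` is pointwise below that of `p`. -/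
lemma ht_le_of_dep_parity :
    ∀ n S (p q : ℕ → ℕ), S.card = n → IsPairing S p → IsPairing S q →
      (∀ z ∈ S, dep S q (p z) % 2 = dep S q z % 2) → ∀ i, ht S q i ≤ ht S p i := by
  intro n
  induction n using Nat.strong_induction_on with
  | _ n IH =>
    intro S p q hcard hp hq hstar i
    rcases S.eq_empty_or_nonempty with rfl | hne
    · simp [ht]
    obtain ⟨x, hxS, hlt, hgap⟩ := hp.exists_adjacent hne
    have hyS : p x ∈ S := hp.mem hxS
    set y := p x with hy
    have hpar : dep S q x % 2 = dep S q y % 2 := (hstar x hxS).symm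
    have hcard2 : (S \ {x, y}).card = n - 2 := by
      rw [card_sdiff_of_subset (by
        intro a ha
        simp only [mem_insert, mem_singleton] at ha
        rcases ha with rfl | rfl <;> assumption)]
      rw [hcard, card_insert_of_notMem (by simp; omega), card_singleton]
    have hnpos : 0 < n := hcard ▸ card_pos.mpr hne
    have key : ∀ q' : ℕ → ℕ, IsPairing S q' → q' x = y →
        (∀ z ∈ S, dep S q' (p z) % 2 = dep S q' z % 2) →
        ht S q' i ≤ ht S p i := by
      intro q' hq' harc' hstar'
      have hp' : IsPairing (S \ {x, y}) p := hp.sdiff hxS rfl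
      have hq'' : IsPairing (S \ {x, y}) q' := hq'.sdiff hxS harc'
      have hstar'' : ∀ z ∈ S \ {x, y},
          dep (S \ {x, y}) q' (p z) % 2 = dep (S \ {x, y}) q' z % 2 := by
        intro z hz
        have hzS := (mem_sdiff.mp hz).1
        rw [dep_sdiff hq' hxS hyS hlt hgap harc' (hp.mem hzS),
          dep_sdiff hq' hxS hyS hlt hgap harc' hzS]
        exact hstar' z hzS
      have hrec := IH (n - 2) (by omega) (S \ {x, y}) p q' hcard2 hp' hq'' hstar'' i
      rw [ht_sdiff hq' hxS hyS hlt harc' i, ht_sdiff hp hxS hyS hlt rfl i]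
      omega
    rcases hq.adjacent_cases hxS hyS hlt hgap hpar with harc | ⟨hcx, hdy⟩
    · exact key q hq harc hstar
    · -- valley: do surgery first
      have hq' := vswap_isPairing hq hxS hyS hlt hgap hcx hdy
      have hstar' : ∀ z ∈ S, dep S (vswap q x y) (p z) % 2 = dep S (vswap q x y) z % 2 := by
        intro z hz
        by_cases hzx : z = x
        · subst hzx
          rw [← hy, dep_vswap_y hq hxS hyS hlt hgap hcx hdy,
            dep_vswap_x hq hxS hyS hlt hgap hcx hdy]
          omega
        · by_cases hzy : z = y
          · subst hzy
            have hpy : p y = x := by rw [hy, hp.invol hxS]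
            rw [hpy, dep_vswap_x hq hxS hyS hlt hgap hcx hdy,
              dep_vswap_y hq hxS hyS hlt hgap hcx hdy]
            omega
          · have hpzx : p z ≠ x := fun e => hzy (by rw [(hp.eq_iff' hxS hz).mp e, ← hy])
            have hpzy : p z ≠ y := fun e => hzx ((hp.eq_iff hxS hz).mp (by rw [e, hy]))
            rw [dep_vswap_other hq hxS hyS hlt hgap hcx hdy (hp.mem hz) hpzx hpzy,
              dep_vswap_other hq hxS hyS hlt hgap hcx hdy hz hzx hzy]
            exact hstar z hz
      have h1 := key (vswap q x y) hq' vswap_x hstar'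
      have h2 := ht_vswap hq hxS hyS hlt hgap hcx hdy i
      omega


/-! ### Height steps and determinacy -/

lemma IsPairing.ht_succ (hq : IsPairing S q) {z : ℕ} (hz : z ∈ S) :
    ht S q (z + 1) = dep S q z + (if z < q z then 1 else 0) := by
  classical
  unfold ht dep
  by_cases h : z < q z
  · rw [if_pos h]
    have hset : S.filter (fun a => a < z + 1 ∧ z + 1 ≤ q a)
        = insert z (S.filter (fun a => a < z ∧ z < q a)) := by
      ext a
      simp only [mem_filter, mem_insert]
      constructor
      · rintro ⟨haS, h1, h2⟩
        by_cases haz : a = z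
        · exact Or.inl haz
        · exact Or.inr ⟨haS, by omega, by omega⟩
      · rintro (rfl | ⟨haS, h1, h2⟩)
        · exact ⟨hz, by omega, by omega⟩
        · exact ⟨haS, by omega, by omega⟩
    rw [hset, card_insert_of_notMem (by simp)]
  · rw [if_neg h]
    have hset : S.filter (fun a => a < z + 1 ∧ z + 1 ≤ q a)
        = S.filter (fun a => a < z ∧ z < q a) := by
      ext a
      simp only [mem_filter]
      constructor
      · rintro ⟨haS, h1, h2⟩
        by_cases haz : a = z
        · subst haz; omega
        · exact ⟨haS, by omega, by omega⟩
      · rintro ⟨haS, h1, h2⟩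
        exact ⟨haS, by omega, by omega⟩
    rw [hset]; omega

lemma IsPairing.ht_self (hq : IsPairing S q) {z : ℕ} (hz : z ∈ S) :
    ht S q z = dep S q z + (if q z < z then 1 else 0) := by
  classical
  have hinv : q (q z) = z := hq.invol hz
  have hne := hq.ne' hz
  unfold ht dep
  by_cases h : q z < z
  · rw [if_pos h]
    have hset : S.filter (fun a => a < z ∧ z ≤ q a)
        = insert (q z) (S.filter (fun a => a < z ∧ z < q a)) := by
      ext a
      simp only [mem_filter, mem_insert]
      constructor
      · rintro ⟨haS, h1, h2⟩
        by_cases haz : q a = z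
        · exact Or.inl ((hq.eq_iff' hz haS).mp haz)
        · exact Or.inr ⟨haS, by omega, by omega⟩
      · rintro (rfl | ⟨haS, h1, h2⟩)
        · exact ⟨hq.mem hz, by omega, by omega⟩
        · exact ⟨haS, by omega, by omega⟩
    rw [hset, card_insert_of_notMem (by simp only [mem_filter]; omega)]
  · rw [if_neg h]
    have hset : S.filter (fun a => a < z ∧ z ≤ q a)
        = S.filter (fun a => a < z ∧ z < q a) := by
      ext a
      simp only [mem_filter]
      constructor
      · rintro ⟨haS, h1, h2⟩
        by_cases haz : q a = z
        · have := (hq.eq_iff' hz haS).mp haz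
          omega
        · exact ⟨haS, by omega, by omega⟩
      · rintro ⟨haS, h1, h2⟩
        exact ⟨haS, by omega, by omega⟩
    rw [hset]; omega

/-- **Determinacy**: a noncrossing pairing is determined by its height profile. -/
lemma eq_of_ht_eq :
    ∀ n S (p q : ℕ → ℕ), S.card = n → IsPairing S p → IsPairing S q →
      (∀ i, ht S p i = ht S q i) → ∀ z ∈ S, p z = q z := by
  intro n
  induction n using Nat.strong_induction_on with
  | _ n IH =>
    intro S p q hcard hp hq hh z hzS
    have hne : S.Nonempty := ⟨z, hzS⟩
    obtain ⟨x, hxS, hlt, hgap⟩ := hp.exists_adjacent hne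
    have hyS : p x ∈ S := hp.mem hxS
    set y := p x with hy
    have hnpos : 0 < n := hcard ▸ card_pos.mpr hne
    -- x is an opener of q
    have e1 := hp.ht_succ hxS
    have e2 := hp.ht_self hxS
    have e3 := hq.ht_succ hxS
    have e4 := hq.ht_self hxS
    rw [if_pos hlt] at e1
    rw [if_neg (by omega)] at e2
    have h5 := hh (x + 1)
    have h6 := hh x
    have hqx_opener : x < q x := by
      by_contra hcon
      push_neg at hcon
      have : q x < x := lt_of_le_of_ne hcon (hq.ne' hxS)
      rw [if_neg (by omega)] at e3
      rw [if_pos this] at e4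
      omega
    -- q x = y
    have harc : q x = y := by
      by_contra hne'
      have hqx_gt : y < q x := by
        have := hgap (q x) (hq.mem hxS); omega
      rcases lt_trichotomy (q y) y with hcy | hcy | hcy
      · have hqy_ne : q y ≠ x := fun e => hne' ((hq.eq_iff' hxS hyS).mp e).symm
        have hqy_lt : q y < x := by
          have := hgap (q y) (hq.mem hyS); omega
        exact hq.nc (hq.mem hyS) hxS hqy_lt (by rw [hq.invol hyS]; omega)
          (by rw [hq.invol hyS]; omega)
      · exact hq.ne' hyS hcy
      · have e1' := hp.ht_succ hyS
        have e2' := hp.ht_self hyS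
        have e3' := hq.ht_succ hyS
        have e4' := hq.ht_self hyS
        have hpy : p y = x := by rw [hy, hp.invol hxS]
        rw [if_neg (by omega)] at e1'
        rw [if_pos (by omega)] at e2'
        rw [if_pos hcy] at e3'
        rw [if_neg (by omega)] at e4'
        have := hh (y + 1)
        have := hh y
        omega
    -- delete the arc (x, y) from both and recurse
    have hcard2 : (S \ {x, y}).card = n - 2 := by
      rw [card_sdiff_of_subset (by
        intro a ha
        simp only [mem_insert, mem_singleton] at ha
        rcases ha with rfl | rfl <;> assumption)]
      rw [hcard, card_insert_of_notMem (by simp; omega), card_singleton]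
    have hp' : IsPairing (S \ {x, y}) p := hp.sdiff hxS rfl
    have hq' : IsPairing (S \ {x, y}) q := hq.sdiff hxS harc
    have hh' : ∀ i, ht (S \ {x, y}) p i = ht (S \ {x, y}) q i := by
      intro i
      have a1 := ht_sdiff hp hxS hyS hlt rfl i
      have a2 := ht_sdiff hq hxS hyS hlt harc i
      have := hh i
      omega
    by_cases hzx : z = x
    · subst hzx; rw [harc]
    · by_cases hzy : z = y
      · subst hzy
        have hpy : p y = x := by rw [hy, hp.invol hxS]
        have hqy : q y = x := by rw [← harc, hq.invol hxS]
        rw [hpy, hqy]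
      · exact IH (n - 2) (by omega) _ p q hcard2 hp' hq' hh' z
          (mem_sdiff.mpr ⟨hzS, by simp [hzx, hzy]⟩)

/-! ### Bridge to `NCPair` -/

variable {k : ℕ}

/-- The extension of `p : NCPair k` to a pairing of `Finset.range (2*k) ⊆ ℕ`. -/
def toFun (p : NCPair k) : ℕ → ℕ := fun z =>
  if h : z < 2 * k then (p.1 ⟨z, h⟩ : Fin (2 * k)).val else z

lemma toFun_lt (p : NCPair k) {z : ℕ} (hz : z < 2 * k) :
    toFun p z = (p.1 ⟨z, hz⟩).val := dif_pos hz

lemma toFun_isPairing (p : NCPair k) : IsPairing (range (2 * k)) (toFun p) := by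
  refine ⟨?_, ?_, ?_, ?_⟩
  · intro z hz
    rw [toFun_lt p (mem_range.mp hz)]
    exact mem_range.mpr (Fin.is_lt _)
  · intro z hz
    have hz' := mem_range.mp hz
    rw [toFun_lt p hz', toFun_lt p (Fin.is_lt _)]
    simp [Fin.eta, p.2.1]
  · intro z hz
    have hz' := mem_range.mp hz
    rw [toFun_lt p hz']
    intro e
    exact p.2.2.1 ⟨z, hz'⟩ (Fin.ext e)
  · intro a ha b hb hab h1 h2
    have ha' := mem_range.mp ha
    have hb' := mem_range.mp hb
    rw [toFun_lt p ha'] at h1 h2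
    rw [toFun_lt p hb'] at h2
    exact p.2.2.2 ⟨a, ha'⟩ ⟨b, hb'⟩ (p.1 ⟨a, ha'⟩) (p.1 ⟨b, hb'⟩) hab h1 h2 rfl rfl

lemma toFun_inj {p q : NCPair k} (h : ∀ z ∈ range (2 * k), toFun p z = toFun q z) :
    p = q := by
  apply Subtype.ext
  apply Equiv.ext
  intro x
  have hx := h x.val (mem_range.mpr x.isLt)
  rw [toFun_lt p x.isLt, toFun_lt q x.isLt] at hx
  simp only [Fin.eta] at hx
  exact Fin.ext hx

lemma ht_zero_of_ge {m i : ℕ} {q : ℕ → ℕ} (hq : IsPairing (range m) q) (hi : m ≤ i) :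
    ht (range m) q i = 0 := by
  unfold ht
  rw [card_eq_zero, filter_eq_empty_iff]
  intro a ha
  have := mem_range.mp (hq.mem ha)
  omega

/-- The total height statistic. -/
def phi (p : NCPair k) : ℕ := ∑ i ∈ range (2 * k + 1), ht (range (2 * k)) (toFun p) i

open scoped Classical in
/-- Indicator that the coloring `f` is constant on all arcs of `p`. -/
noncomputable def ind (n : ℕ) (p : NCPair k) (f : Fin (2 * k) → Fin n) : ℝ :=
  if ∀ x, f (p.1 x) = f x then 1 else 0

open scoped Classical in
lemma gram_entry (k n : ℕ) (p q : NCPair k) :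
    Gram k n p q = ∑ f : Fin (2 * k) → Fin n, ind n p f * ind n q f := by
  have hmerge : ∀ f : Fin (2 * k) → Fin n, ind n p f * ind n q f
      = if (∀ x, f (p.1 x) = f x) ∧ (∀ x, f (q.1 x) = f x) then (1 : ℝ) else 0 := by
    intro f
    unfold ind
    split_ifs <;> simp_all
  rw [Finset.sum_congr rfl fun f _ => hmerge f, Finset.sum_boole]
  -- now count the bi-invariant colorings
  set H := Subgroup.closure ({p.1, q.1} : Set (Equiv.Perm (Fin (2 * k)))) with hH
  have key : ∀ f : Fin (2 * k) → Fin n,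
      ((∀ x, f (p.1 x) = f x) ∧ (∀ x, f (q.1 x) = f x)) ↔
        ∀ g : Equiv.Perm (Fin (2 * k)), g ∈ H → ∀ x, f (g x) = f x := by
    intro f
    constructor
    · rintro ⟨h1, h2⟩ g hg
      refine Subgroup.closure_induction (p := fun g _ => ∀ x, f (g x) = f x)
        ?_ ?_ ?_ ?_ hg
      · rintro g hg' x
        simp only [Set.mem_insert_iff, Set.mem_singleton_iff] at hg'
        rcases hg' with rfl | rfl
        · exact h1 x
        · exact h2 x
      · intro x; rfl
      · intro g h _ _ ihg ihh x
        rw [Equiv.Perm.mul_apply, ihg, ihh]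
      · intro g _ ih x
        conv_rhs => rw [← Equiv.apply_symm_apply g x]
        exact (ih _).symm
    · intro h
      exact ⟨h p.1 (Subgroup.subset_closure (Set.mem_insert _ _)) ,
        h q.1 (Subgroup.subset_closure (Set.subset_insert _ _ rfl))⟩
  have e : {f : Fin (2 * k) → Fin n //
      (∀ x, f (p.1 x) = f x) ∧ (∀ x, f (q.1 x) = f x)} ≃
      (Quotient (MulAction.orbitRel H (Fin (2 * k))) → Fin n) :=
    { toFun := fun F => Quotient.lift F.1 (by
        intro a b hab
        obtain ⟨g, rfl⟩ := hab
        exact (key F.1).mp F.2 g.1 g.2 b)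
      invFun := fun F => ⟨fun x => F (Quotient.mk _ x), by
        constructor
        · intro x
          refine congrArg F (Quotient.sound ?_)
          exact ⟨⟨p.1, Subgroup.subset_closure (Set.mem_insert _ _)⟩, rfl⟩
        · intro x
          refine congrArg F (Quotient.sound ?_)
          exact ⟨⟨q.1, Subgroup.subset_closure (Set.subset_insert _ _ rfl)⟩, rfl⟩⟩
      left_inv := fun F => Subtype.ext (funext fun x => rfl)
      right_inv := fun F => funext fun c => Quotient.inductionOn c fun x => rfl }
  have hcardeq : (univ.filter (fun f : Fin (2 * k) → Fin n =>
      (∀ x, f (p.1 x) = f x) ∧ (∀ x, f (q.1 x) = f x))).card = n ^ loops p q := by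
    haveI : Finite (Quotient (MulAction.orbitRel H (Fin (2 * k)))) :=
      Quotient.finite _
    calc (univ.filter (fun f : Fin (2 * k) → Fin n =>
            (∀ x, f (p.1 x) = f x) ∧ (∀ x, f (q.1 x) = f x))).card
        = Fintype.card {f : Fin (2 * k) → Fin n //
            (∀ x, f (p.1 x) = f x) ∧ (∀ x, f (q.1 x) = f x)} :=
          (Fintype.card_subtype _).symm
      _ = Nat.card {f : Fin (2 * k) → Fin n //
            (∀ x, f (p.1 x) = f x) ∧ (∀ x, f (q.1 x) = f x)} :=
          (Nat.card_eq_fintype_card).symm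
      _ = Nat.card (Quotient (MulAction.orbitRel H (Fin (2 * k))) → Fin n) :=
          Nat.card_congr e
      _ = Nat.card (Fin n) ^ Nat.card (Quotient (MulAction.orbitRel H (Fin (2 * k)))) :=
          Nat.card_fun
      _ = n ^ loops p q := by rw [Nat.card_eq_fintype_card, Fintype.card_fin]; rfl
  rw [hcardeq]
  unfold Gram
  push_cast
  rfl

end NCGram

open Finset NCGram Matrix in
/-- For k ≥ 1 and n ≥ 2, the Gram matrix G_{kn} is positive definite;
in particular it is invertible. -/
theorem gram_posDef (k n : ℕ) (hk : 1 ≤ k) (hn : 2 ≤ n) :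
    (Gram k n).PosDef ∧ IsUnit (Gram k n) := by
  classical
  -- symmetry
  have hsym : (Gram k n).IsHermitian := by
    have : ∀ p q : NCPair k, Gram k n q p = Gram k n p q := by
      intro p q
      unfold Gram loops
      rw [Set.pair_comm q.1 p.1]
    unfold Matrix.IsHermitian
    ext p q
    rw [Matrix.conjTranspose_apply, star_trivial, this]
  -- the quadratic form is a sum of squares
  have hquad : ∀ x : NCPair k → ℝ, x ⬝ᵥ (Gram k n).mulVec x
      = ∑ f : Fin (2 * k) → Fin n, (∑ p, x p * ind n p f) ^ 2 := by
    intro x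
    have h1 : x ⬝ᵥ (Gram k n).mulVec x
        = ∑ p, ∑ q, ∑ f : Fin (2 * k) → Fin n,
            (x p * ind n p f) * (x q * ind n q f) := by
      simp only [dotProduct, Matrix.mulVec]
      refine Finset.sum_congr rfl fun p _ => ?_
      rw [Finset.mul_sum]
      refine Finset.sum_congr rfl fun q _ => ?_
      rw [gram_entry k n p q, Finset.sum_mul, Finset.mul_sum]
      exact Finset.sum_congr rfl fun f _ => by ring
    calc x ⬝ᵥ (Gram k n).mulVec x
        = ∑ p, ∑ f : Fin (2 * k) → Fin n, ∑ q,
            (x p * ind n p f) * (x q * ind n q f) := by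
          rw [h1]
          exact Finset.sum_congr rfl fun p _ => Finset.sum_comm
      _ = ∑ f : Fin (2 * k) → Fin n, ∑ p, ∑ q,
            (x p * ind n p f) * (x q * ind n q f) := Finset.sum_comm
      _ = ∑ f : Fin (2 * k) → Fin n, (∑ p, x p * ind n p f) ^ 2 := by
          exact Finset.sum_congr rfl fun f _ => by rw [sq, Finset.sum_mul_sum]
  -- linear independence of the indicator vectors
  have indep : ∀ c : NCPair k → ℝ,
      (∀ f : Fin (2 * k) → Fin n, ∑ p, c p * ind n p f = 0) → c = 0 := by
    intro c hc
    by_contra hc0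
    have hsupp : (univ.filter fun p : NCPair k => c p ≠ 0).Nonempty := by
      obtain ⟨p₀, hp₀⟩ := Function.ne_iff.mp hc0
      exact ⟨p₀, mem_filter.mpr ⟨mem_univ _, hp₀⟩⟩
    obtain ⟨q₀, hq₀mem, hq₀max⟩ := Finset.exists_max_image _ phi hsupp
    have hQ := toFun_isPairing q₀
    set f₀ : Fin (2 * k) → Fin n :=
      fun x => ⟨dep (range (2 * k)) (toFun q₀) x.val % 2, by omega⟩ with hf₀
    have hcond : ∀ p : NCPair k, (∀ x, f₀ (p.1 x) = f₀ x) ↔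
        (∀ z ∈ range (2 * k), dep (range (2 * k)) (toFun q₀) (toFun p z) % 2
          = dep (range (2 * k)) (toFun q₀) z % 2) := by
      intro p
      constructor
      · intro h z hz
        have hz' := mem_range.mp hz
        have hv := congrArg Fin.val (h ⟨z, hz'⟩)
        simp only [hf₀] at hv
        rw [toFun_lt p hz']
        exact hv
      · intro h x
        have hv := h x.val (mem_range.mpr x.isLt)
        rw [toFun_lt p x.isLt] at hv
        apply Fin.ext
        simp only [hf₀]
        simpa [Fin.eta] using hv
    have hdiag : ∀ x, f₀ (q₀.1 x) = f₀ x := by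
      apply (hcond q₀).mpr
      intro z hz
      rw [hQ.dep_apply hz]
    have hsum : ∑ p, c p * ind n p f₀ = c q₀ := by
      have hmain : ∀ p ∈ (univ : Finset (NCPair k)), p ≠ q₀ → c p * ind n p f₀ = 0 := by
        intro p _ hpq
        unfold ind
        split_ifs with h
        · rw [mul_one]
          by_contra hcp
          have hpmem : p ∈ univ.filter fun p : NCPair k => c p ≠ 0 :=
            mem_filter.mpr ⟨mem_univ _, hcp⟩
          have hR := (hcond p).mp h
          have hle : ∀ i, ht (range (2 * k)) (toFun q₀) i
              ≤ ht (range (2 * k)) (toFun p) i :=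
            ht_le_of_dep_parity (range (2 * k)).card (range (2 * k))
              (toFun p) (toFun q₀) rfl (toFun_isPairing p) hQ hR
          have hphile : phi q₀ ≤ phi p := Finset.sum_le_sum fun i _ => hle i
          have hphieq : phi q₀ = phi p := le_antisymm hphile (hq₀max p hpmem)
          have hall := (Finset.sum_eq_sum_iff_of_le (fun i _ => hle i)).mp hphieq
          have hhteq : ∀ i, ht (range (2 * k)) (toFun q₀) i
              = ht (range (2 * k)) (toFun p) i := by
            intro i
            by_cases hi : i < 2 * k + 1
            · exact hall i (mem_range.mpr hi)
            · rw [ht_zero_of_ge (toFun_isPairing p) (by omega),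
                ht_zero_of_ge hQ (by omega)]
          have : q₀ = p := toFun_inj fun z hz =>
            eq_of_ht_eq (range (2 * k)).card (range (2 * k)) (toFun q₀) (toFun p)
              rfl hQ (toFun_isPairing p) hhteq z hz
          exact hpq this.symm
        · rw [mul_zero]
      have hnm : q₀ ∉ (univ : Finset (NCPair k)) → c q₀ * ind n q₀ f₀ = 0 :=
        fun h => absurd (mem_univ q₀) h
      rw [Finset.sum_eq_single q₀ hmain hnm]
      unfold ind
      rw [if_pos hdiag, mul_one]
    have := hc f₀
    rw [hsum] at this
    exact (mem_filter.mp hq₀mem).2 this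
  -- positive definiteness
  have hpd : (Gram k n).PosDef := by
    refine Matrix.PosDef.of_dotProduct_mulVec_pos hsym fun x hx => ?_
    have hsx : star x = x := funext fun p => star_trivial (x p)
    rw [hsx, hquad x]
    refine lt_of_le_of_ne (Finset.sum_nonneg fun f _ => sq_nonneg _) ?_
    intro h0
    apply hx
    apply indep
    intro f
    have hz := (Finset.sum_eq_zero_iff_of_nonneg
      (fun f _ => sq_nonneg (∑ p, x p * ind n p f))).mp h0.symm f (mem_univ f)
    exact (pow_eq_zero_iff (two_ne_zero)).mp hz
  exact ⟨hpd, (Matrix.isUnit_iff_isUnit_det _).mpr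
    (isUnit_iff_ne_zero.mpr hpd.det_pos.ne')⟩
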